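/- Each of the four small-step relations ⇀ (apply), →read, →store, and →merge is deterministic on well-formed configurations: if (C1, h1, e1) and (C2, h2, e2) are both obtained from a well-formed configuration (C, h, e) by a step of the same relation, then (C1, h1, e1) = (C2, h2, e2). -/

import Mathlib

namespace Memo

/-! ### Terms over a program signature -/

/-- Terms over operation symbols `Op`, constructors `Con` and variables `V`. -/
inductive Tm (Op Con V : Type) : Type
  | var : V → Tm Op Con V
  | op  : Op → List (Tm Op Con V) → Tm Op Con V
  | con : Con → List (Tm Op Con V) → Tm Op Con V

namespace Tm
variable {Op Con V : Type}

/-- Substitution. -/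
def subst (σ : V → Tm Op Con V) : Tm Op Con V → Tm Op Con V
  | .var x => σ x
  | .op f ts => .op f (ts.attach.map fun t => subst σ t.1)
  | .con c ts => .con c (ts.attach.map fun t => subst σ t.1)
decreasing_by
  all_goals simp_wf
  all_goals (have := List.sizeOf_lt_of_mem t.2; omega)

/-- The size `|t|` of a term (number of symbols). -/
def size : Tm Op Con V → ℕ
  | .var _ => 1
  | .op _ ts => 1 + (ts.attach.map fun t => size t.1).sum
  | .con _ ts => 1 + (ts.attach.map fun t => size t.1).sum
decreasing_by
  all_goals simp_wf
  all_goals (have := List.sizeOf_lt_of_mem t.2; omega)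

/-- Number of occurrences of the variable `x` in a term. -/
def varCount [DecidableEq V] (x : V) : Tm Op Con V → ℕ
  | .var y => if y = x then 1 else 0
  | .op _ ts => (ts.attach.map fun t => varCount x t.1).sum
  | .con _ ts => (ts.attach.map fun t => varCount x t.1).sum
decreasing_by
  all_goals simp_wf
  all_goals (have := List.sizeOf_lt_of_mem t.2; omega)

end Tm

/-- Values: ground constructor terms. -/
inductive IsValue {Op Con V : Type} : Tm Op Con V → Prop
  | con {c : Con} {ts} : (∀ t ∈ ts, IsValue t) → IsValue (.con c ts)

/-- Ground terms: terms without variables. -/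
inductive Ground {Op Con V : Type} : Tm Op Con V → Prop
  | op {f : Op} {ts} : (∀ t ∈ ts, Ground t) → Ground (.op f ts)
  | con {c : Con} {ts} : (∀ t ∈ ts, Ground t) → Ground (.con c ts)

/-- Patterns: terms built from constructors and variables only. -/
inductive IsPattern {Op Con V : Type} : Tm Op Con V → Prop
  | var (x : V) : IsPattern (.var x)
  | con {c : Con} {ts} : (∀ t ∈ ts, IsPattern t) → IsPattern (.con c ts)

/-- The variable `x` occurs in the given term. -/
inductive VarIn {Op Con V : Type} (x : V) : Tm Op Con V → Prop
  | var : VarIn x (.var x)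
  | op {f : Op} {ts t} : t ∈ ts → VarIn x t → VarIn x (.op f ts)
  | con {c : Con} {ts t} : t ∈ ts → VarIn x t → VarIn x (.con c ts)

/-! ### Programs -/

/-- A rewrite rule `f(p₁,…,pₖ) → r`. -/
structure Rule (Op Con V : Type) where
  lhsOp : Op
  lhsArgs : List (Tm Op Con V)
  rhs : Tm Op Con V

/-- A program: a finite set (list) of rewrite rules. -/
structure Prog (Op Con V : Type) where
  rules : List (Rule Op Con V)

/-- Well-formed rule: left-hand side arguments are patterns and all variables of the
right-hand side occur in the left-hand side. -/
def WFRule {Op Con V : Type} (r : Rule Op Con V) : Prop :=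
  (∀ p ∈ r.lhsArgs, IsPattern p) ∧
  (∀ x, VarIn x r.rhs → ∃ p ∈ r.lhsArgs, VarIn x p)

/-- Left-linearity: every variable occurs at most once in the left-hand side. -/
def LeftLinear {Op Con V : Type} [DecidableEq V] (r : Rule Op Con V) : Prop :=
  ∀ x : V, (r.lhsArgs.map (Tm.varCount x)).sum ≤ 1

/-- Non-ambiguity: no two rules have overlapping left-hand sides. -/
def NonAmbiguous {Op Con V : Type} (P : Prog Op Con V) : Prop :=
  ∀ r1 ∈ P.rules, ∀ r2 ∈ P.rules, r1.lhsOp = r2.lhsOp →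
    ∀ σ1 σ2 : V → Tm Op Con V,
      r1.lhsArgs.map (Tm.subst σ1) = r2.lhsArgs.map (Tm.subst σ2) → r1 = r2

/-- Orthogonal program: well-formed, left-linear and non-ambiguous. -/
def Orthogonal {Op Con V : Type} [DecidableEq V] (P : Prog Op Con V) : Prop :=
  (∀ r ∈ P.rules, WFRule r ∧ LeftLinear r) ∧ NonAmbiguous P

/-! ### Standard call-by-value big-step semantics (Figure 3) -/

mutual
/-- `Eval P t v`: the term `t` reduces to the value `v`. -/
inductive Eval {Op Con V : Type} (P : Prog Op Con V) : Tm Op Con V → Tm Op Con V → Prop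
  | con {c : Con} {ts vs} : EvalList P ts vs → Eval P (.con c ts) (.con c vs)
  | split {f : Op} {ts vs v} : EvalList P ts vs → Eval P (.op f vs) v →
      Eval P (.op f ts) v
  | apply {f : Op} {vs r σ v} : (∀ u ∈ vs, IsValue u) → r ∈ P.rules → r.lhsOp = f →
      vs = r.lhsArgs.map (Tm.subst σ) → Eval P (Tm.subst σ r.rhs) v →
      Eval P (.op f vs) v

/-- Left-to-right evaluation of a list of terms. -/
inductive EvalList {Op Con V : Type} (P : Prog Op Con V) :
    List (Tm Op Con V) → List (Tm Op Con V) → Prop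
  | nil : EvalList P [] []
  | cons {t v ts vs} : Eval P t v → EvalList P ts vs → EvalList P (t :: ts) (v :: vs)
end

/-! ### Cost-annotated big-step semantics with memoization (Figure 4) -/

/-- A cache: a set of pairs of a function call on values and its result value. -/
abbrev TCache (Op Con V : Type) := Set (Op × List (Tm Op Con V) × Tm Op Con V)

mutual
/-- `MEval P C₀ t m C₁ v`: starting with cache `C₀` the term `t` reduces to the value `v`
with updated cache `C₁` at cost `m` (number of non-tabulated function applications). -/
inductive MEval {Op Con V : Type} (P : Prog Op Con V) :
    TCache Op Con V → Tm Op Con V → ℕ → TCache Op Con V → Tm Op Con V → Prop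
  | con {C0 C1 : TCache Op Con V} {c : Con} {ts m vs} :
      MEvalList P C0 ts m C1 vs →
      MEval P C0 (.con c ts) m C1 (.con c vs)
  | split {C0 C1 C2 : TCache Op Con V} {f : Op} {ts m vs n v} :
      MEvalList P C0 ts m C1 vs →
      MEval P C1 (.op f vs) n C2 v →
      MEval P C0 (.op f ts) (n + m) C2 v
  | read {C : TCache Op Con V} {f : Op} {vs v} :
      (∀ u ∈ vs, IsValue u) → (f, vs, v) ∈ C →
      MEval P C (.op f vs) 0 C v
  | update {C C' : TCache Op Con V} {f : Op} {vs r σ m v} :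
      (∀ u ∈ vs, IsValue u) → (∀ u, (f, vs, u) ∉ C) →
      r ∈ P.rules → r.lhsOp = f → vs = r.lhsArgs.map (Tm.subst σ) →
      MEval P C (Tm.subst σ r.rhs) m C' v →
      MEval P C (.op f vs) (m + 1) (insert (f, vs, v) C') v

/-- Left-to-right evaluation of a list of terms, threading the cache and summing costs. -/
inductive MEvalList {Op Con V : Type} (P : Prog Op Con V) :
    TCache Op Con V → List (Tm Op Con V) → ℕ → TCache Op Con V → List (Tm Op Con V) → Prop
  | nil {C : TCache Op Con V} : MEvalList P C [] 0 C []
  | cons {C0 C1 C2 : TCache Op Con V} {t m v ts n vs} :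
      MEval P C0 t m C1 v → MEvalList P C1 ts n C2 vs →
      MEvalList P C0 (t :: ts) (m + n) C2 (v :: vs)
end

/-! ### Heaps -/

/-- Locations. -/
abbrev Loc := ℕ

/-- A heap: a (partial) map from locations to constructors applied to locations,
i.e. a term graph over the constructors whose nodes are locations. -/
abbrev Heap (Con : Type) := Loc → Option (Con × List Loc)

/-- Domain (set of nodes) of a heap. -/
def heapDom {Con : Type} (h : Heap Con) : Set Loc := {l | h l ≠ none}

/-- A heap is maximally shared if equally labeled locations coincide. -/
def MaxShared {Con : Type} (h : Heap Con) : Prop :=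
  ∀ l1 l2 c ls, h l1 = some (c, ls) → h l2 = some (c, ls) → l1 = l2

/-- All successors of heap nodes are again heap nodes. -/
def HeapClosed {Con : Type} (h : Heap Con) : Prop :=
  ∀ l c ls, h l = some (c, ls) → ∀ l' ∈ ls, l' ∈ heapDom h

/-- `HUnfolds h l v`: the value `v` is stored at location `l`, i.e. `v = [l]_h` is
obtained by unfolding the heap `h` starting from location `l`. -/
inductive HUnfolds {Op Con V : Type} (h : Heap Con) : Loc → Tm Op Con V → Prop
  | mk {l : Loc} {c ls ts} : h l = some (c, ls) → ls.length = ts.length →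
      (∀ (i : ℕ) l' t, ls[i]? = some l' → ts[i]? = some t → HUnfolds h l' t) →
      HUnfolds h l (.con c ts)

/-- `merge(h, c(ℓ⃗)) = (h', ℓ)`: extension of the heap `h` by `c(ℓ⃗)` retaining maximal
sharing; an existing location is reused if possible, otherwise the first fresh location
is used. -/
inductive Merge {Con : Type} (h : Heap Con) (c : Con) (ls : List Loc) : Heap Con → Loc → Prop
  | reuse {l : Loc} : h l = some (c, ls) → Merge h c ls h l
  | fresh {l : Loc} : (∀ l', h l' ≠ some (c, ls)) → h l = none →
      (∀ l' < l, h l' ≠ none) →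
      Merge h c ls (Function.update h l (some (c, ls))) l

/-! ### Expressions, evaluation contexts and configurations -/

/-- Expressions: terms extended with locations and markers `f⟨ℓ⃗⟩{e}`. -/
inductive Expr (Op Con : Type) : Type
  | loc : Loc → Expr Op Con
  | op : Op → List (Expr Op Con) → Expr Op Con
  | con : Con → List (Expr Op Con) → Expr Op Con
  | marked : Op → List Loc → Expr Op Con → Expr Op Con

/-- Value expressions: built from constructors and locations only. -/
inductive IsValExpr {Op Con : Type} : Expr Op Con → Prop
  | loc (l : Loc) : IsValExpr (.loc l)
  | con {c : Con} {es} : (∀ e ∈ es, IsValExpr e) → IsValExpr (.con c es)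

/-- Evaluation contexts: a unique hole, with only locations to the left of the hole. -/
inductive Ctx (Op Con : Type) : Type
  | hole : Ctx Op Con
  | marked : Op → List Loc → Ctx Op Con → Ctx Op Con
  | op : Op → List Loc → Ctx Op Con → List (Expr Op Con) → Ctx Op Con
  | con : Con → List Loc → Ctx Op Con → List (Expr Op Con) → Ctx Op Con

/-- Plugging an expression into the hole of an evaluation context. -/
def Ctx.plug {Op Con : Type} : Ctx Op Con → Expr Op Con → Expr Op Con
  | .hole, e => e
  | .marked f ls E, e => .marked f ls (E.plug e)
  | .op f ls E es, e => .op f (ls.map Expr.loc ++ E.plug e :: es)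
  | .con c ls E es, e => .con c (ls.map Expr.loc ++ E.plug e :: es)

/-- A cache over locations. -/
abbrev HCache (Op : Type) := Set (Op × List Loc × Loc)

/-- Configurations: a cache, a heap and an expression. -/
abbrev Config (Op Con : Type) := HCache Op × Heap Con × Expr Op Con

/-- Instantiation of a term by a substitution mapping variables to locations,
yielding an expression. -/
def instE {Op Con V : Type} (σ : V → Loc) : Tm Op Con V → Expr Op Con
  | .var x => .loc (σ x)
  | .op f ts => .op f (ts.attach.map fun t => instE σ t.1)
  | .con c ts => .con c (ts.attach.map fun t => instE σ t.1)
decreasing_by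
  all_goals simp_wf
  all_goals (have := List.sizeOf_lt_of_mem t.2; omega)

/-- `PMatch h σ p l`: the pattern `p` matches the value stored at location `l` of the
heap `h`, binding the variables of `p` to locations according to `σ`.  This captures
matching via a homomorphism from the canonical tree of `p` into the heap, `σ` being the
induced substitution. -/
inductive PMatch {Op Con V : Type} (h : Heap Con) (σ : V → Loc) : Tm Op Con V → Loc → Prop
  | var {x l} : σ x = l → PMatch h σ (.var x) l
  | con {c : Con} {ps l ls} : h l = some (c, ls) → ps.length = ls.length →
      (∀ (i : ℕ) p l', ps[i]? = some p → ls[i]? = some l' → PMatch h σ p l') →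
      PMatch h σ (.con c ps) l

/-! ### Small-step semantics with memoization and sharing (Figure 6) -/

/-- The (apply) step. -/
inductive ApplyStep {Op Con V : Type} (P : Prog Op Con V) : Config Op Con → Config Op Con → Prop
  | mk {C : HCache Op} {h : Heap Con} {E : Ctx Op Con} {f ls r σ} :
      (∀ l, (f, ls, l) ∉ C) →
      r ∈ P.rules → r.lhsOp = f →
      r.lhsArgs.length = ls.length →
      (∀ (i : ℕ) p l, r.lhsArgs[i]? = some p → ls[i]? = some l → PMatch h σ p l) →
      ApplyStep P (C, h, E.plug (.op f (ls.map Expr.loc)))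
        (C, h, E.plug (.marked f ls (instE σ r.rhs)))

/-- The (read) step. -/
inductive ReadStep {Op Con : Type} : Config Op Con → Config Op Con → Prop
  | mk {C : HCache Op} {h : Heap Con} {E : Ctx Op Con} {f ls l} :
      (f, ls, l) ∈ C →
      ReadStep (C, h, E.plug (.op f (ls.map Expr.loc))) (C, h, E.plug (.loc l))

/-- The (store) step. -/
inductive StoreStep {Op Con : Type} : Config Op Con → Config Op Con → Prop
  | mk {C : HCache Op} {h : Heap Con} {E : Ctx Op Con} {f ls l} :
      StoreStep (C, h, E.plug (.marked f ls (.loc l)))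
        (insert (f, ls, l) C, h, E.plug (.loc l))

/-- The (merge) step. -/
inductive MergeStep {Op Con : Type} : Config Op Con → Config Op Con → Prop
  | mk {C : HCache Op} {h h' : Heap Con} {E : Ctx Op Con} {c ls l} :
      Merge h c ls h' l →
      MergeStep (C, h, E.plug (.con c (ls.map Expr.loc))) (C, h', E.plug (.loc l))

/-- `→sm`: read, store or merge. -/
def SmStep {Op Con : Type} : Config Op Con → Config Op Con → Prop :=
  fun a b => ReadStep a b ∨ StoreStep a b ∨ MergeStep a b

/-- `⇒`: apply, read, store or merge. -/
def Step {Op Con V : Type} (P : Prog Op Con V) : Config Op Con → Config Op Con → Prop :=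
  fun a b => ApplyStep P a b ∨ SmStep a b

/-- n-fold composition of `⇒`. -/
def StepN {Op Con V : Type} (P : Prog Op Con V) : ℕ → Config Op Con → Config Op Con → Prop
  | 0 => fun a b => a = b
  | n + 1 => fun a c => ∃ b, Step P a b ∧ StepN P n b c

/-- `→sm*`. -/
def SmSteps {Op Con : Type} : Config Op Con → Config Op Con → Prop :=
  Relation.ReflTransGen SmStep

/-- `⇛ = →sm* · ⇀ · →sm*`. -/
def MacroStep {Op Con V : Type} (P : Prog Op Con V) : Config Op Con → Config Op Con → Prop :=
  fun a d => ∃ b c, SmSteps a b ∧ ApplyStep P b c ∧ SmSteps c d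

/-- `⇛^m`, the m-fold composition of `⇛`: a reduction containing exactly `m` apply steps. -/
def MacroStepN {Op Con V : Type} (P : Prog Op Con V) : ℕ → Config Op Con → Config Op Con → Prop
  | 0 => fun a b => a = b
  | n + 1 => fun a c => ∃ b, MacroStep P a b ∧ MacroStepN P n b c

/-! ### Well-formed configurations -/

/-- A marker `f⟨ℓ⃗⟩{·}` occurs somewhere in the given expression. -/
inductive MarkedIn {Op Con : Type} (f : Op) (ls : List Loc) : Expr Op Con → Prop
  | here {e} : MarkedIn f ls (.marked f ls e)
  | op {g es e} : e ∈ es → MarkedIn f ls e → MarkedIn f ls (.op g es)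
  | con {c es e} : e ∈ es → MarkedIn f ls e → MarkedIn f ls (.con c es)
  | marked {g ls' e} : MarkedIn f ls e → MarkedIn f ls (.marked g ls' e)

/-- The location `l` occurs in the given expression. -/
inductive LocInExpr {Op Con : Type} (l : Loc) : Expr Op Con → Prop
  | loc : LocInExpr l (.loc l)
  | op {f es e} : e ∈ es → LocInExpr l e → LocInExpr l (.op f es)
  | con {c es e} : e ∈ es → LocInExpr l e → LocInExpr l (.con c es)
  | markedArg {f ls e} : l ∈ ls → LocInExpr l (.marked f ls e)
  | markedBody {f ls e} : LocInExpr l e → LocInExpr l (.marked f ls e)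

/-- Well-formed configurations: the heap is a maximally shared term graph, the cache is a
function compatible with the expression, and there are no dangling locations. -/
def WF {Op Con : Type} (cfg : Config Op Con) : Prop :=
  MaxShared cfg.2.1 ∧ HeapClosed cfg.2.1 ∧
  (∀ f ls l1 l2, (f, ls, l1) ∈ cfg.1 → (f, ls, l2) ∈ cfg.1 → l1 = l2) ∧
  (∀ f ls, MarkedIn f ls cfg.2.2 → ∀ l, (f, ls, l) ∉ cfg.1) ∧
  (∀ f ls l, (f, ls, l) ∈ cfg.1 → l ∈ heapDom cfg.2.1 ∧ ∀ l' ∈ ls, l' ∈ heapDom cfg.2.1) ∧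
  (∀ l, LocInExpr l cfg.2.2 → l ∈ heapDom cfg.2.1)

/-! ### Unfolding of expressions and caches -/

/-- `EUnfolds h e t`: the term `t = [e]_h` is obtained from `e` by following pointers to
the heap and erasing markers. -/
inductive EUnfolds {Op Con V : Type} (h : Heap Con) : Expr Op Con → Tm Op Con V → Prop
  | loc {l t} : HUnfolds h l t → EUnfolds h (.loc l) t
  | op {f : Op} {es ts} : es.length = ts.length →
      (∀ (i : ℕ) e t, es[i]? = some e → ts[i]? = some t → EUnfolds h e t) →
      EUnfolds h (.op f es) (.op f ts)
  | con {c : Con} {es ts} : es.length = ts.length →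
      (∀ (i : ℕ) e t, es[i]? = some e → ts[i]? = some t → EUnfolds h e t) →
      EUnfolds h (.con c es) (.con c ts)
  | marked {f ls e t} : EUnfolds h e t → EUnfolds h (.marked f ls e) t

/-- `[C]_h`: the unfolding of a location cache into a term cache. -/
def cacheUnfold {Op Con : Type} (V : Type) (h : Heap Con) (C : HCache Op) :
    TCache Op Con V :=
  {x | ∃ ls l, (x.1, ls, l) ∈ C ∧ ls.length = x.2.1.length ∧
    (∀ (i : ℕ) l' t, ls[i]? = some l' → x.2.1[i]? = some t → HUnfolds h l' t) ∧
    HUnfolds h l x.2.2}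

/-- An initial configuration: empty cache, maximally shared heap without dangling
locations, and an expression `f(v₁,…,vₖ)` whose arguments are value expressions. -/
def InitialConf {Op Con : Type} (h : Heap Con) (e : Expr Op Con) : Prop :=
  MaxShared h ∧ HeapClosed h ∧ (∀ l, LocInExpr l e → l ∈ heapDom h) ∧
  ∃ (f : Op) (es : List (Expr Op Con)), e = .op f es ∧ ∀ e' ∈ es, IsValExpr e'

/-! ### Sizes and weights -/

/-- The size `|e|` of an expression: every symbol and location counts one. -/
def exprSize {Op Con : Type} : Expr Op Con → ℕ
  | .loc _ => 1
  | .op _ es => 1 + (es.attach.map fun e => exprSize e.1).sum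
  | .con _ es => 1 + (es.attach.map fun e => exprSize e.1).sum
  | .marked _ _ e => 1 + exprSize e
decreasing_by
  all_goals simp_wf
  all_goals (have := List.sizeOf_lt_of_mem e.2; omega)

/-- The weight `‖e‖` of an expression: like the size, but locations count zero. -/
def weight {Op Con : Type} : Expr Op Con → ℕ
  | .loc _ => 0
  | .op _ es => 1 + (es.attach.map fun e => weight e.1).sum
  | .con _ es => 1 + (es.attach.map fun e => weight e.1).sum
  | .marked _ _ e => 1 + weight e
decreasing_by
  all_goals simp_wf
  all_goals (have := List.sizeOf_lt_of_mem e.2; omega)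

/-- `Δ`, the maximal size of a right-hand side of the program. -/
def progDelta {Op Con V : Type} (P : Prog Op Con V) : ℕ :=
  (P.rules.map fun r => r.rhs.size).foldr max 1

/-- The size of a configuration: cardinality of the cache plus number of heap nodes plus
size of the expression. -/
noncomputable def confSize {Op Con : Type} (cfg : Config Op Con) : ℕ :=
  cfg.1.ncard + (heapDom cfg.2.1).ncard + exprSize cfg.2.2

open Classical in
/-- The number of apply steps along a list of configurations. -/
noncomputable def applyCount {Op Con V : Type} (P : Prog Op Con V) :
    List (Config Op Con) → ℕ
  | [] => 0
  | [_] => 0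
  | a :: b :: rest => (if ApplyStep P a b then 1 else 0) + applyCount P (b :: rest)

end Memo

namespace Memo

section Aux
variable {Op Con V : Type}

theorem attach_map_eq {α β : Type*} (l : List α) (f : α → β) :
    (l.attach.map fun t => f t.1) = l.map f := by
  rw [show (fun t : {x // x ∈ l} => f t.1) = f ∘ Subtype.val from rfl, ← List.map_map,
    List.attach_map_subtype_val]

/-- Custom induction principle for terms. -/
theorem Tm.myrec {motive : Tm Op Con V → Prop}
    (hv : ∀ x, motive (.var x))
    (ho : ∀ f ts, (∀ t ∈ ts, motive t) → motive (.op f ts))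
    (hc : ∀ c ts, (∀ t ∈ ts, motive t) → motive (.con c ts)) : ∀ t, motive t
  | .var x => hv x
  | .op f ts => ho f ts (fun t ht => Tm.myrec hv ho hc t)
  | .con c ts => hc c ts (fun t ht => Tm.myrec hv ho hc t)
decreasing_by
  all_goals simp_wf
  all_goals (have := List.sizeOf_lt_of_mem ht; omega)

theorem subst_var (σ : V → Tm Op Con V) (x : V) : Tm.subst σ (.var x) = σ x := by
  rw [Tm.subst]

theorem subst_op (σ : V → Tm Op Con V) (f : Op) (ts : List (Tm Op Con V)) :
    Tm.subst σ (.op f ts) = .op f (ts.map (Tm.subst σ)) := by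
  rw [Tm.subst, attach_map_eq]

theorem subst_con (σ : V → Tm Op Con V) (c : Con) (ts : List (Tm Op Con V)) :
    Tm.subst σ (.con c ts) = .con c (ts.map (Tm.subst σ)) := by
  rw [Tm.subst, attach_map_eq]

theorem varCount_var [DecidableEq V] (x y : V) :
    Tm.varCount (Op := Op) (Con := Con) x (.var y) = if y = x then 1 else 0 := by
  rw [Tm.varCount]

theorem varCount_op [DecidableEq V] (x : V) (f : Op) (ts : List (Tm Op Con V)) :
    Tm.varCount x (.op f ts) = (ts.map (Tm.varCount x)).sum := by
  rw [Tm.varCount, attach_map_eq]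

theorem varCount_con [DecidableEq V] (x : V) (c : Con) (ts : List (Tm Op Con V)) :
    Tm.varCount x (.con c ts) = (ts.map (Tm.varCount x)).sum := by
  rw [Tm.varCount, attach_map_eq]

theorem instE_var (σ : V → Loc) (x : V) :
    instE (Op := Op) (Con := Con) σ (.var x) = .loc (σ x) := by rw [instE]

theorem instE_op (σ : V → Loc) (f : Op) (ts : List (Tm Op Con V)) :
    instE σ (.op f ts) = .op f (ts.map (instE σ)) := by rw [instE, attach_map_eq]

theorem instE_con (σ : V → Loc) (c : Con) (ts : List (Tm Op Con V)) :
    instE σ (.con c ts) = .con c (ts.map (instE σ)) := by rw [instE, attach_map_eq]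

theorem one_le_varCount [DecidableEq V] {x : V} {t : Tm Op Con V} (hv : VarIn x t) :
    1 ≤ t.varCount x := by
  induction hv with
  | var => simp [varCount_var]
  | op hmem _ ih =>
      rw [varCount_op]
      exact le_trans ih (List.single_le_sum (fun _ _ => Nat.zero_le _) _
        (List.mem_map_of_mem hmem))
  | con hmem _ ih =>
      rw [varCount_con]
      exact le_trans ih (List.single_le_sum (fun _ _ => Nat.zero_le _) _
        (List.mem_map_of_mem hmem))

theorem get_le_sum {l : List ℕ} {i : ℕ} {n : ℕ} (h : l[i]? = some n) : n ≤ l.sum :=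
  List.single_le_sum (fun _ _ => Nat.zero_le _) _ (List.mem_of_getElem? h)

theorem two_get_le_sum {l : List ℕ} {i j a b : ℕ} (hij : i ≠ j)
    (ha : l[i]? = some a) (hb : l[j]? = some b) : a + b ≤ l.sum := by
  induction l generalizing i j with
  | nil => simp at ha
  | cons x t ih =>
      match i, j with
      | 0, 0 => exact absurd rfl hij
      | 0, j+1 =>
          simp only [List.getElem?_cons_zero, Option.some.injEq] at ha
          simp only [List.getElem?_cons_succ] at hb
          subst ha
          have := get_le_sum hb
          simp [List.sum_cons]; omega
      | i+1, 0 =>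
          simp only [List.getElem?_cons_zero, Option.some.injEq] at hb
          simp only [List.getElem?_cons_succ] at ha
          subst hb
          have := get_le_sum ha
          simp [List.sum_cons]; omega
      | i+1, j+1 =>
          simp only [List.getElem?_cons_succ] at ha hb
          have := ih (fun hh => hij (by omega)) ha hb
          simp [List.sum_cons]; omega

theorem subst_id_of {σ : V → Tm Op Con V} :
    ∀ t : Tm Op Con V, (∀ x, VarIn x t → σ x = .var x) → t.subst σ = t := by
  intro t
  induction t using Tm.myrec with
  | hv x => intro H; rw [subst_var]; exact H x .var
  | ho f ts ih =>
      intro H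
      rw [subst_op]
      congr 1
      rw [show ts.map (Tm.subst σ) = ts.map id from
        List.map_congr_left fun t ht => ih t ht fun x hx => H x (.op ht hx), List.map_id]
  | hc c ts ih =>
      intro H
      rw [subst_con]
      congr 1
      rw [show ts.map (Tm.subst σ) = ts.map id from
        List.map_congr_left fun t ht => ih t ht fun x hx => H x (.con ht hx), List.map_id]

theorem instE_congr {σ1 σ2 : V → Loc} :
    ∀ t : Tm Op Con V, (∀ x, VarIn x t → σ1 x = σ2 x) →
      instE (Op := Op) (Con := Con) σ1 t = instE σ2 t := by
  intro t
  induction t using Tm.myrec with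
  | hv x => intro H; rw [instE_var, instE_var, H x .var]
  | ho f ts ih =>
      intro H
      rw [instE_op, instE_op]
      congr 1
      exact List.map_congr_left fun t ht => ih t ht fun x hx => H x (.op ht hx)
  | hc c ts ih =>
      intro H
      rw [instE_con, instE_con]
      congr 1
      exact List.map_congr_left fun t ht => ih t ht fun x hx => H x (.con ht hx)

theorem pmatch_var_det {h : Heap Con} {σ1 σ2 : V → Loc} {x : V} {p : Tm Op Con V}
    (hv : VarIn x p) : ∀ {l : Loc}, PMatch (Op := Op) h σ1 p l → PMatch h σ2 p l →
      σ1 x = σ2 x := by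
  induction hv with
  | var =>
      intro l h1 h2
      cases h1 with | var e1 => cases h2 with | var e2 => rw [e1, e2]
  | op hmem _ _ => intro l h1 _; exact absurd h1 (by intro hh; cases hh)
  | con hmem _ ih =>
      intro l h1 h2
      cases h1 with | con hl1 hlen1 hch1 =>
      rename_i ls1
      cases h2 with | con hl2 hlen2 hch2 =>
      rename_i ls2
      obtain ⟨i, hilt, hi⟩ := List.mem_iff_getElem.1 hmem
      have hts := List.getElem?_eq_getElem hilt
      rw [hi] at hts
      have hilt' : i < ls1.length := by omega
      have hls : ls1[i]? = some ls1[i] := List.getElem?_eq_getElem hilt'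
      rw [hl1] at hl2
      have hls12 : ls1 = ls2 := by
        injection hl2 with hh; injection hh
      subst hls12
      exact ih (hch1 i _ _ hts hls) (hch2 i _ _ hts hls)

/-! #### Unique decomposition -/

/-- The expression is a location. -/
def ELoc (e : Expr Op Con) : Prop := ∃ l, e = .loc l

theorem plug_eq_loc {E : Ctx Op Con} {e : Expr Op Con} {l : Loc}
    (h : E.plug e = .loc l) : E = .hole ∧ e = .loc l := by
  cases E with
  | hole => exact ⟨rfl, h⟩
  | marked f ls E₁ => exact absurd h (by simp [Ctx.plug])
  | op f ls E₁ es => exact absurd h (by simp [Ctx.plug])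
  | con c ls E₁ es => exact absurd h (by simp [Ctx.plug])

/-- A "flat redex": not a location, and all scanned sub-positions are locations. -/
structure SafeR (e : Expr Op Con) : Prop where
  nloc : ∀ l, e ≠ .loc l
  opargs : ∀ f es, e = .op f es → ∀ x ∈ es, ELoc x
  conargs : ∀ c es, e = .con c es → ∀ x ∈ es, ELoc x
  mbody : ∀ f ls b, e = .marked f ls b → ELoc b

theorem not_eloc_of_safe {e : Expr Op Con} (he : SafeR e) : ¬ ELoc e :=
  fun ⟨l, hl⟩ => he.nloc l hl

theorem plug_not_eloc {E : Ctx Op Con} {e : Expr Op Con} (he : SafeR e) :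
    ¬ ELoc (E.plug e) := by
  rintro ⟨l, hl⟩
  exact not_eloc_of_safe he ⟨l, (plug_eq_loc hl).2⟩

theorem plug_hole_of_safe {E : Ctx Op Con} {e r : Expr Op Con}
    (hr : SafeR r) (he : SafeR e) (h : E.plug e = r) : E = .hole := by
  cases E with
  | hole => rfl
  | marked f ls E₁ =>
      obtain ⟨l, hl⟩ := hr.mbody f ls (E₁.plug e) h.symm
      exact absurd ⟨l, hl⟩ (plug_not_eloc he)
  | op f ls E₁ es =>
      have hmem : E₁.plug e ∈ ls.map Expr.loc ++ E₁.plug e :: es :=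
        List.mem_append_right _ (List.mem_cons_self)
      obtain ⟨l, hl⟩ := hr.opargs f _ h.symm _ hmem
      exact absurd ⟨l, hl⟩ (plug_not_eloc he)
  | con c ls E₁ es =>
      have hmem : E₁.plug e ∈ ls.map Expr.loc ++ E₁.plug e :: es :=
        List.mem_append_right _ (List.mem_cons_self)
      obtain ⟨l, hl⟩ := hr.conargs c _ h.symm _ hmem
      exact absurd ⟨l, hl⟩ (plug_not_eloc he)

theorem append_cons_split {α : Type*} (p : α → Prop) :
    ∀ {l₁ l₂ : List α} {x y : α} {r₁ r₂ : List α},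
      (∀ a ∈ l₁, p a) → (∀ a ∈ l₂, p a) → ¬ p x → ¬ p y →
      l₁ ++ x :: r₁ = l₂ ++ y :: r₂ → l₁ = l₂ ∧ x = y ∧ r₁ = r₂ := by
  intro l₁
  induction l₁ with
  | nil =>
      intro l₂ x y r₁ r₂ _ h₂ hx hy h
      cases l₂ with
      | nil => simpa using h
      | cons b t =>
          simp only [List.nil_append, List.cons_append, List.cons.injEq] at h
          exact absurd (h.1 ▸ h₂ b (List.mem_cons_self)) hx
  | cons a t ih =>
      intro l₂ x y r₁ r₂ h₁ h₂ hx hy h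
      cases l₂ with
      | nil =>
          simp only [List.cons_append, List.nil_append, List.cons.injEq] at h
          exact absurd (h.1 ▸ h₁ a (List.mem_cons_self)) hy
      | cons b t₂ =>
          simp only [List.cons_append, List.cons.injEq] at h
          obtain ⟨hab, h'⟩ := h
          obtain ⟨e1, e2, e3⟩ := ih (fun z hz => h₁ z (List.mem_cons_of_mem _ hz))
            (fun z hz => h₂ z (List.mem_cons_of_mem _ hz)) hx hy h'
          exact ⟨by rw [hab, e1], e2, e3⟩

theorem loc_map_inj {ls ls' : List Loc} (h : ls.map (Expr.loc (Op := Op) (Con := Con))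
    = ls'.map Expr.loc) : ls = ls' := by
  have hinj : Function.Injective (Expr.loc (Op := Op) (Con := Con)) := by
    intro a b hab; injection hab
  exact List.map_injective_iff.2 hinj h

theorem plug_uniq {e e' : Expr Op Con} (he : SafeR e) (he' : SafeR e') :
    ∀ (E : Ctx Op Con) (E' : Ctx Op Con), E.plug e = E'.plug e' → E = E' ∧ e = e' := by
  intro E
  induction E with
  | hole =>
      intro E' h
      have hE' : E' = .hole := plug_hole_of_safe he he' h.symm
      subst hE'
      exact ⟨rfl, h⟩
  | marked f ls E₁ ih =>
      intro E' h
      cases E' with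
      | hole =>
          have : Ctx.marked f ls E₁ = Ctx.hole := plug_hole_of_safe he' he h
          exact absurd this (by simp)
      | marked g ls₂ E₂ =>
          simp only [Ctx.plug, Expr.marked.injEq] at h
          obtain ⟨h1, h2, h3⟩ := h
          obtain ⟨e1, e2⟩ := ih E₂ h3
          exact ⟨by rw [h1, h2, e1], e2⟩
      | op g ls₂ E₂ es₂ => exact absurd h (by simp [Ctx.plug])
      | con g ls₂ E₂ es₂ => exact absurd h (by simp [Ctx.plug])
  | op f ls₁ E₁ es₁ ih =>
      intro E' h
      cases E' with
      | hole =>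
          have : Ctx.op f ls₁ E₁ es₁ = Ctx.hole := plug_hole_of_safe he' he h
          exact absurd this (by simp)
      | marked g ls₂ E₂ => exact absurd h (by simp [Ctx.plug])
      | op g ls₂ E₂ es₂ =>
          simp only [Ctx.plug, Expr.op.injEq] at h
          obtain ⟨h1, h2⟩ := h
          obtain ⟨e1, e2, e3⟩ := append_cons_split ELoc
            (fun a ha => by obtain ⟨l, _, hl⟩ := List.mem_map.1 ha; exact ⟨l, hl.symm⟩)
            (fun a ha => by obtain ⟨l, _, hl⟩ := List.mem_map.1 ha; exact ⟨l, hl.symm⟩)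
            (plug_not_eloc he) (plug_not_eloc he') h2
          obtain ⟨e4, e5⟩ := ih E₂ e2
          exact ⟨by rw [h1, loc_map_inj e1, e3, e4], e5⟩
      | con g ls₂ E₂ es₂ => exact absurd h (by simp [Ctx.plug])
  | con c ls₁ E₁ es₁ ih =>
      intro E' h
      cases E' with
      | hole =>
          have : Ctx.con c ls₁ E₁ es₁ = Ctx.hole := plug_hole_of_safe he' he h
          exact absurd this (by simp)
      | marked g ls₂ E₂ => exact absurd h (by simp [Ctx.plug])
      | op g ls₂ E₂ es₂ => exact absurd h (by simp [Ctx.plug])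
      | con g ls₂ E₂ es₂ =>
          simp only [Ctx.plug, Expr.con.injEq] at h
          obtain ⟨h1, h2⟩ := h
          obtain ⟨e1, e2, e3⟩ := append_cons_split ELoc
            (fun a ha => by obtain ⟨l, _, hl⟩ := List.mem_map.1 ha; exact ⟨l, hl.symm⟩)
            (fun a ha => by obtain ⟨l, _, hl⟩ := List.mem_map.1 ha; exact ⟨l, hl.symm⟩)
            (plug_not_eloc he) (plug_not_eloc he') h2
          obtain ⟨e4, e5⟩ := ih E₂ e2
          exact ⟨by rw [h1, loc_map_inj e1, e3, e4], e5⟩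

theorem safeR_op (f : Op) (ls : List Loc) :
    SafeR (Expr.op (Con := Con) f (ls.map Expr.loc)) := by
  refine ⟨by simp, ?_, by simp, by simp⟩
  intro g es hg x hx
  injection hg with h1 h2
  subst h2
  obtain ⟨l, _, hl⟩ := List.mem_map.1 hx
  exact ⟨l, hl.symm⟩

theorem safeR_con (c : Con) (ls : List Loc) :
    SafeR (Expr.con (Op := Op) c (ls.map Expr.loc)) := by
  refine ⟨by simp, by simp, ?_, by simp⟩
  intro g es hg x hx
  injection hg with h1 h2
  subst h2
  obtain ⟨l, _, hl⟩ := List.mem_map.1 hx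
  exact ⟨l, hl.symm⟩

theorem safeR_marked (f : Op) (ls : List Loc) (l : Loc) :
    SafeR (Expr.marked (Con := Con) f ls (.loc l)) := by
  refine ⟨by simp, by simp, by simp, ?_⟩
  intro g ls' b hg
  injection hg with h1 h2 h3
  exact ⟨l, h3.symm⟩

/-! #### Corresponding subterm pairs and the pairing function -/

/-- `SP p q p₀ q₀`: `(p₀, q₀)` is a pair of corresponding subterms of `(p, q)`. -/
inductive SP : Tm Op Con V → Tm Op Con V → Tm Op Con V → Tm Op Con V → Prop
  | refl (p q : Tm Op Con V) : SP p q p q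
  | step {c c' : Con} {ps qs : List (Tm Op Con V)} {i : ℕ} {p q p₀ q₀ : Tm Op Con V} :
      ps[i]? = some p → qs[i]? = some q → SP p q p₀ q₀ →
      SP (.con c ps) (.con c' qs) p₀ q₀

theorem SP.swap {p q p₀ q₀ : Tm Op Con V} (h : SP (Op := Op) p q p₀ q₀) :
    SP q p q₀ p₀ := by
  induction h with
  | refl => exact .refl _ _
  | step hp hq _ ih => exact .step hq hp ih

theorem SP.varIn {p q p₀ q₀ : Tm Op Con V} (h : SP (Op := Op) p q p₀ q₀) :
    ∀ {x : V}, VarIn x p₀ → VarIn x p := by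
  induction h with
  | refl => intro x hx; exact hx
  | step hp hq _ ih => intro x hx; exact .con (List.mem_of_getElem? hp) (ih hx)

mutual
/-- The subterm of `q` at the position where `x` occurs in `p` (if any). -/
def pairOf [DecidableEq V] (x : V) : Tm Op Con V → Tm Op Con V → Option (Tm Op Con V)
  | .var y, q => if y = x then some q else none
  | .con _ ps, .con _ qs => pairOfL x ps qs
  | .con _ _, .var _ => none
  | .con _ _, .op _ _ => none
  | .op _ _, .var _ => none
  | .op _ _, .op _ _ => none
  | .op _ _, .con _ _ => none

/-- List version of `pairOf`. -/
def pairOfL [DecidableEq V] (x : V) :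
    List (Tm Op Con V) → List (Tm Op Con V) → Option (Tm Op Con V)
  | [], _ => none
  | _ :: _, [] => none
  | p :: ps, q :: qs => (pairOf x p q).orElse fun _ => pairOfL x ps qs
end

section Pair
variable [DecidableEq V] {x y : V}

theorem orElse_some {α : Type*} (v : α) (f : Unit → Option α) :
    (some v).orElse f = f () ∨ (some v).orElse f = some v := .inr rfl

theorem pairOfL_nil_left (qs : List (Tm Op Con V)) :
    pairOfL (Op := Op) x [] qs = none := by
  rw [pairOfL]

theorem pairOfL_nil_right (ps : List (Tm Op Con V)) :
    pairOfL (Op := Op) x ps [] = none := by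
  cases ps <;> rw [pairOfL]

theorem pairOfL_cons (p : Tm Op Con V) (ps : List (Tm Op Con V)) (q qs) :
    pairOfL (Op := Op) x (p :: ps) (q :: qs)
      = (pairOf x p q).orElse fun _ => pairOfL x ps qs := by
  rw [pairOfL]

theorem pairOfL_cons_none {p : Tm Op Con V} {ps : List (Tm Op Con V)} {q qs}
    (h : pairOf (Op := Op) x p q = none) :
    pairOfL x (p :: ps) (q :: qs) = pairOfL x ps qs := by
  rw [pairOfL_cons, h]; rfl

theorem pairOfL_cons_some {p : Tm Op Con V} {ps : List (Tm Op Con V)} {q qs v}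
    (h : pairOf (Op := Op) x p q = some v) :
    pairOfL x (p :: ps) (q :: qs) = some v := by
  rw [pairOfL_cons, h]; rfl

theorem pairOf_var (y : V) (q : Tm Op Con V) :
    pairOf (Op := Op) x (.var y) q = if y = x then some q else none := by
  rw [pairOf]

theorem pairOf_con_con (c c' : Con) (ps qs : List (Tm Op Con V)) :
    pairOf (Op := Op) x (.con c ps) (.con c' qs) = pairOfL x ps qs := by
  rw [pairOf]

theorem pairOf_op (f : Op) (ps : List (Tm Op Con V)) (q : Tm Op Con V) :
    pairOf x (.op f ps) q = none := by
  cases q <;> rw [pairOf]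

theorem pairOf_con_var (c : Con) (ps : List (Tm Op Con V)) (z : V) :
    pairOf (Op := Op) x (.con c ps) (.var z) = none := by
  rw [pairOf]

theorem pairOf_con_op (c : Con) (ps : List (Tm Op Con V)) (f : Op) (qs) :
    pairOf x (.con c ps) (.op f qs) = none := by
  rw [pairOf]

/-- `pairOf` is `none` when the variable does not occur. -/
theorem pairOf_none_of_count_zero :
    ∀ p : Tm Op Con V, Tm.varCount x p = 0 → ∀ q, pairOf (Op := Op) x p q = none := by
  intro p
  induction p using Tm.myrec with
  | hv z =>
      intro hc q
      rw [varCount_var] at hc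
      rw [pairOf_var]
      simp only [ite_eq_right_iff]
      intro hz
      simp [hz] at hc
  | ho f ts _ => intro _ q; exact pairOf_op f ts q
  | hc c ts ih =>
      intro hc0 q
      cases q with
      | var z => exact pairOf_con_var _ _ _
      | op f qs => exact pairOf_con_op _ _ _ _
      | con c' qs =>
          rw [pairOf_con_con]
          rw [varCount_con] at hc0
          have hall : ∀ p ∈ ts, ∀ q, pairOf (Op := Op) x p q = none := by
            intro p hp q
            refine ih p hp ?_ q
            exact List.sum_eq_zero_iff.1 hc0 _ (List.mem_map_of_mem hp)
          clear ih hc0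
          induction ts generalizing qs with
          | nil => exact pairOfL_nil_left _
          | cons p ps ihl =>
              cases qs with
              | nil => exact pairOfL_nil_right _
              | cons q qs =>
                  rw [pairOfL_cons_none (hall p (List.mem_cons_self) q)]
                  exact ihl qs (fun p hp => hall p (List.mem_cons_of_mem _ hp))

theorem pairOfL_none_of_all :
    ∀ (ps qs : List (Tm Op Con V)),
      (∀ (i : ℕ) p q, ps[i]? = some p → qs[i]? = some q → pairOf (Op := Op) x p q = none) →
      pairOfL x ps qs = none := by
  intro ps
  induction ps with
  | nil => intro qs _; exact pairOfL_nil_left _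
  | cons p ps ih =>
      intro qs H
      cases qs with
      | nil => exact pairOfL_nil_right _
      | cons q qs =>
          rw [pairOfL_cons_none (H 0 p q (by simp) (by simp))]
          exact ih qs fun i p' q' hp hq => H (i + 1) p' q' (by simpa using hp)
            (by simpa using hq)

theorem pairOfL_some_at :
    ∀ (ps qs : List (Tm Op Con V)) (i : ℕ) (p q v),
      ps[i]? = some p → qs[i]? = some q → pairOf (Op := Op) x p q = some v →
      (∀ (j : ℕ) p' q', j ≠ i → ps[j]? = some p' → qs[j]? = some q' →
        pairOf x p' q' = none) →
      pairOfL x ps qs = some v := by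
  intro ps
  induction ps with
  | nil => intro qs i p q v hp; simp at hp
  | cons p₁ ps ih =>
      intro qs i p q v hp hq hv H
      cases qs with
      | nil => simp at hq
      | cons q₁ qs =>
          cases i with
          | zero =>
              simp only [List.getElem?_cons_zero, Option.some.injEq] at hp hq
              subst hp; subst hq
              exact pairOfL_cons_some hv
          | succ i =>
              simp only [List.getElem?_cons_succ] at hp hq
              rw [pairOfL_cons_none (H 0 p₁ q₁ (by omega) (by simp) (by simp))]
              exact ih qs i p q v hp hq hv fun j p' q' hj hp' hq' =>
                H (j + 1) p' q' (by omega) (by simpa using hp') (by simpa using hq')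

/-- If `(var x, q₀)` is a corresponding pair and `x` is linear in `p`,
then `pairOf` finds `q₀`. -/
theorem pairOf_some_of_sp {p q p₀ q₀ : Tm Op Con V} (hsp : SP (Op := Op) p q p₀ q₀) :
    ∀ x : V, p₀ = .var x → Tm.varCount x p ≤ 1 → pairOf x p q = some q₀ := by
  induction hsp with
  | refl p' q' =>
      intro x hx hlin
      subst hx
      rw [pairOf_var]
      simp
  | @step c c' ps qs i p' q' pp qq hp hq hsp' ih =>
      intro x hx hlin
      subst hx
      rw [pairOf_con_con]
      have hin : VarIn x p' := hsp'.varIn .var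
      have hcnt : 1 ≤ Tm.varCount x p' := one_le_varCount hin
      rw [varCount_con] at hlin
      have hmap : (ps.map (Tm.varCount x))[i]? = some (Tm.varCount x p') := by
        rw [List.getElem?_map, hp]; rfl
      refine pairOfL_some_at ps qs i p' q' _ hp hq
        (ih x rfl (le_trans (get_le_sum hmap) hlin)) ?_
      intro j pj qj hj hpj hqj
      have hmapj : (ps.map (Tm.varCount x))[j]? = some (Tm.varCount x pj) := by
        rw [List.getElem?_map, hpj]; rfl
      have := two_get_le_sum (a := Tm.varCount x p') (b := Tm.varCount x pj)
        (by omega : (i : ℕ) ≠ j) hmap hmapj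
      exact pairOf_none_of_count_zero pj (by omega) qj

/-- If the unique occurrence of `y` in `p` lies inside a subterm `p₀` whose mate is a
variable, and `p₀ ≠ var y`, then `pairOf y p q = none`. -/
theorem pairOf_none_of_blocked {p q p₀ q₀ : Tm Op Con V}
    (hsp : SP (Op := Op) p q p₀ q₀) :
    ∀ z : V, q₀ = .var z → VarIn y p₀ → p₀ ≠ .var y →
      Tm.varCount y p ≤ 1 → pairOf y p q = none := by
  induction hsp with
  | refl p' q' =>
      intro z hz hin hne hlin
      cases p' with
      | var w => cases hin; exact absurd rfl hne
      | op f ts => exact pairOf_op _ _ _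
      | con c ts => subst hz; exact pairOf_con_var _ _ _
  | @step c c' ps qs i p' q' pp qq hp hq hsp' ih =>
      intro z hz hin hne hlin
      rw [pairOf_con_con]
      have hin' : VarIn y p' := hsp'.varIn hin
      have hcnt : 1 ≤ Tm.varCount y p' := one_le_varCount hin'
      rw [varCount_con] at hlin
      have hmap : (ps.map (Tm.varCount y))[i]? = some (Tm.varCount y p') := by
        rw [List.getElem?_map, hp]; rfl
      refine pairOfL_none_of_all ps qs ?_
      intro j pj qj hpj hqj
      by_cases hji : j = i
      · subst hji
        rw [hpj] at hp; rw [hqj] at hq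
        injection hp with hp; injection hq with hq
        subst hp; subst hq
        exact ih z hz hin hne (le_trans (get_le_sum hmap) hlin)
      · have hmapj : (ps.map (Tm.varCount y))[j]? = some (Tm.varCount y pj) := by
          rw [List.getElem?_map, hpj]; rfl
        have := two_get_le_sum (a := Tm.varCount y p') (b := Tm.varCount y pj)
          (by omega : (i : ℕ) ≠ j) hmap hmapj
        exact pairOf_none_of_count_zero pj (by omega) qj

end Pair

/-! #### Common instance of two patterns matching the same locations -/

theorem common_instance {h : Heap Con} {σ1 σ2 : V → Loc} {τ1 τ2 : V → Tm Op Con V} :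
    ∀ {p : Tm Op Con V} {l : Loc}, PMatch (Op := Op) h σ1 p l →
    ∀ {q : Tm Op Con V}, PMatch h σ2 q l →
    (∀ x q₀, SP p q (.var x) q₀ → τ1 x = q₀ ∧ Tm.subst τ2 q₀ = q₀) →
    (∀ y p₀, SP q p (.var y) p₀ → τ2 y = Tm.subst τ1 p₀) →
    Tm.subst τ1 p = Tm.subst τ2 q := by
  intro p l hm1
  induction hm1 with
  | @var x l hσ =>
      intro q hm2 H1 H2
      obtain ⟨e1, e2⟩ := H1 x q (SP.refl _ _)
      rw [subst_var, e1, e2]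
  | @con c ps l ls hl hlen hch ih =>
      intro q hm2 H1 H2
      cases hm2 with
      | @var y _ hσ2 =>
          rw [subst_var, H2 y (.con c ps) (SP.refl _ _)]
      | @con c' qs _ ls2 hl2 hlen2 hch2 =>
          rw [hl] at hl2
          injection hl2 with hl2
          injection hl2 with hcc hls
          subst hcc; subst hls
          rw [subst_con, subst_con]
          congr 1
          apply List.ext_getElem?
          intro i
          rw [List.getElem?_map, List.getElem?_map]
          cases hp : ps[i]? with
          | none =>
              have hips : ps.length ≤ i := by
                by_contra hlt
                rw [List.getElem?_eq_getElem (by omega)] at hp; simp at hp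
              have : qs[i]? = none := List.getElem?_eq_none (by omega)
              rw [this]
              rfl
          | some p' =>
              have hips : i < ps.length := by
                by_contra hlt
                rw [List.getElem?_eq_none (by omega)] at hp; simp at hp
              have hiq : i < qs.length := by omega
              have hq : qs[i]? = some qs[i] := List.getElem?_eq_getElem hiq
              have hil : i < ls.length := by omega
              have hli : ls[i]? = some ls[i] := List.getElem?_eq_getElem hil
              have e := ih i p' ls[i] hp hli (hch2 i qs[i] ls[i] hq hli)
                (fun x q₀ hsp => H1 x q₀ (SP.step hp hq hsp))
                (fun y p₀ hsp => H2 y p₀ (SP.step hq hp hsp))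
              rw [hq]
              simp only [Option.map_some]
              rw [e]

section Glue
variable [DecidableEq V]

/-- Auxiliary function for the second substitution. -/
def tau2Aux (y : V) : Option (Tm Op Con V) → Tm Op Con V
  | some (.var _) => .var y
  | some (.op f ts) => .op f ts
  | some (.con c ts) => .con c ts
  | none => .var y

theorem pairOfL_some_global {as bs : List (Tm Op Con V)} {x : V}
    (lin : ∀ z : V, (as.map (Tm.varCount z)).sum ≤ 1) {i : ℕ} {p q q₀ : Tm Op Con V}
    (hpi : as[i]? = some p) (hqi : bs[i]? = some q)
    (hsp : SP (Op := Op) p q (.var x) q₀) : pairOfL x as bs = some q₀ := by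
  have hin : VarIn x p := hsp.varIn .var
  have hmap : (as.map (Tm.varCount x))[i]? = some (Tm.varCount x p) := by
    rw [List.getElem?_map, hpi]; rfl
  refine pairOfL_some_at as bs i p q q₀ hpi hqi
    (pairOf_some_of_sp hsp x rfl (le_trans (get_le_sum hmap) (lin x))) ?_
  intro j pj qj hj hpj hqj
  have hmapj : (as.map (Tm.varCount x))[j]? = some (Tm.varCount x pj) := by
    rw [List.getElem?_map, hpj]; rfl
  have h2 := two_get_le_sum (a := Tm.varCount x p) (b := Tm.varCount x pj)
    (by omega : (i : ℕ) ≠ j) hmap hmapj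
  have h1 : 1 ≤ Tm.varCount x p := one_le_varCount hin
  have := lin x
  exact pairOf_none_of_count_zero pj (by omega) qj

theorem pairOfL_none_global {as bs : List (Tm Op Con V)} {y z : V}
    (lin : ∀ w : V, (as.map (Tm.varCount w)).sum ≤ 1) {i : ℕ} {p q p₀ : Tm Op Con V}
    (hpi : as[i]? = some p) (hqi : bs[i]? = some q)
    (hsp : SP (Op := Op) p q p₀ (.var z)) (hin : VarIn y p₀) (hne : p₀ ≠ .var y) :
    pairOfL y as bs = none := by
  have hin' : VarIn y p := hsp.varIn hin
  have hmap : (as.map (Tm.varCount y))[i]? = some (Tm.varCount y p) := by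
    rw [List.getElem?_map, hpi]; rfl
  refine pairOfL_none_of_all as bs ?_
  intro j pj qj hpj hqj
  by_cases hji : j = i
  · subst hji
    rw [hpj] at hpi; rw [hqj] at hqi
    injection hpi with hpi; injection hqi with hqi
    subst hpi; subst hqi
    exact pairOf_none_of_blocked hsp z rfl hin hne (le_trans (get_le_sum hmap) (lin y))
  · have hmapj : (as.map (Tm.varCount y))[j]? = some (Tm.varCount y pj) := by
      rw [List.getElem?_map, hpj]; rfl
    have h2 := two_get_le_sum (a := Tm.varCount y p) (b := Tm.varCount y pj)
      (by omega : (i : ℕ) ≠ j) hmap hmapj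
    have h1 : 1 ≤ Tm.varCount y p := one_le_varCount hin'
    have := lin y
    exact pairOf_none_of_count_zero pj (by omega) qj

/-- Determinism of rule selection and instantiation for the (apply) step. -/
theorem apply_det {P : Prog Op Con V} (hP : Orthogonal P)
    {h : Heap Con} {ls : List Loc} {f : Op} {r1 r2 : Rule Op Con V} {σ1 σ2 : V → Loc}
    (hr1 : r1 ∈ P.rules) (ho1 : r1.lhsOp = f) (hl1 : r1.lhsArgs.length = ls.length)
    (hm1 : ∀ (i : ℕ) p l, r1.lhsArgs[i]? = some p → ls[i]? = some l → PMatch h σ1 p l)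
    (hr2 : r2 ∈ P.rules) (ho2 : r2.lhsOp = f) (hl2 : r2.lhsArgs.length = ls.length)
    (hm2 : ∀ (i : ℕ) p l, r2.lhsArgs[i]? = some p → ls[i]? = some l → PMatch h σ2 p l) :
    r1 = r2 ∧ instE (Op := Op) (Con := Con) σ1 r1.rhs = instE σ2 r2.rhs := by
  set as1 := r1.lhsArgs with has1
  set as2 := r2.lhsArgs with has2
  have lin1 : ∀ z : V, (as1.map (Tm.varCount z)).sum ≤ 1 := (hP.1 r1 hr1).2
  have lin2 : ∀ z : V, (as2.map (Tm.varCount z)).sum ≤ 1 := (hP.1 r2 hr2).2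
  set τ1 : V → Tm Op Con V := fun x => (pairOfL x as1 as2).getD (.var x) with hτ1
  set τ2 : V → Tm Op Con V := fun y => tau2Aux y (pairOfL y as2 as1) with hτ2
  have key : ∀ (i : ℕ) (p q : Tm Op Con V) (l : Loc), as1[i]? = some p →
      as2[i]? = some q → ls[i]? = some l →
      Tm.subst τ1 p = Tm.subst τ2 q := by
    intro i p q l hpi hqi hli
    refine common_instance (hm1 i p l hpi hli) (hm2 i q l hqi hli) ?_ ?_
    · intro x q₀ hsp
      have hA : pairOfL x as1 as2 = some q₀ := pairOfL_some_global lin1 hpi hqi hsp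
      constructor
      · rw [hτ1]; simp [hA]
      · refine subst_id_of q₀ ?_
        intro y hy
        rw [hτ2]
        cases q₀ with
        | var z =>
            cases hy
            have hB : pairOfL y as2 as1 = some (.var x) :=
              pairOfL_some_global lin2 hqi hpi hsp.swap
            simp [hB, tau2Aux]
        | op g ts =>
            have hB : pairOfL y as2 as1 = none :=
              pairOfL_none_global lin2 hqi hpi hsp.swap hy (by simp)
            simp [hB, tau2Aux]
        | con cc ts =>
            have hB : pairOfL y as2 as1 = none :=
              pairOfL_none_global lin2 hqi hpi hsp.swap hy (by simp)
            simp [hB, tau2Aux]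
    · intro y p₀ hsp
      have hB : pairOfL y as2 as1 = some p₀ := pairOfL_some_global lin2 hqi hpi hsp
      cases p₀ with
      | var x =>
          have hA : pairOfL x as1 as2 = some (.var y) :=
            pairOfL_some_global lin1 hpi hqi hsp.swap
          rw [subst_var, hτ1, hτ2]
          simp [hA, hB, tau2Aux]
      | op g ts =>
          have : Tm.subst τ1 (.op g ts) = .op g ts := by
            refine subst_id_of _ ?_
            intro x hx
            have hA : pairOfL x as1 as2 = none :=
              pairOfL_none_global lin1 hpi hqi hsp.swap hx (by simp)
            rw [hτ1]; simp [hA]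
          rw [this, hτ2]
          simp [hB, tau2Aux]
      | con cc ts =>
          have : Tm.subst τ1 (.con cc ts) = .con cc ts := by
            refine subst_id_of _ ?_
            intro x hx
            have hA : pairOfL x as1 as2 = none :=
              pairOfL_none_global lin1 hpi hqi hsp.swap hx (by simp)
            rw [hτ1]; simp [hA]
          rw [this, hτ2]
          simp [hB, tau2Aux]
  have hmapeq : as1.map (Tm.subst τ1) = as2.map (Tm.subst τ2) := by
    apply List.ext_getElem?
    intro i
    rw [List.getElem?_map, List.getElem?_map]
    cases hpi : as1[i]? with
    | none =>
        have hle : as1.length ≤ i := by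
          by_contra hlt
          rw [List.getElem?_eq_getElem (by omega)] at hpi; simp at hpi
        have : as2[i]? = none := List.getElem?_eq_none (by omega)
        rw [this]; rfl
    | some p =>
        have hlt : i < as1.length := by
          by_contra hge
          rw [List.getElem?_eq_none (by omega)] at hpi; simp at hpi
        have hq : as2[i]? = some as2[i] := List.getElem?_eq_getElem (by omega)
        have hli : ls[i]? = some ls[i] := List.getElem?_eq_getElem (by omega)
        rw [hq]
        simp only [Option.map_some]
        rw [key i p as2[i] ls[i] hpi hq hli]
  have hr12 : r1 = r2 := hP.2 r1 hr1 r2 hr2 (ho1.trans ho2.symm) τ1 τ2 hmapeq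
  subst hr12
  refine ⟨rfl, instE_congr _ ?_⟩
  intro x hx
  obtain ⟨p, hpmem, hvp⟩ := (hP.1 r1 hr1).1.2 x hx
  obtain ⟨i, hilt, hieq⟩ := List.mem_iff_getElem.1 hpmem
  have hpi : r1.lhsArgs[i]? = some p := by
    rw [List.getElem?_eq_getElem hilt, hieq]
  have hlsi : i < ls.length := by rw [← hl1, has1]; exact hilt
  have hli : ls[i]? = some ls[i] := List.getElem?_eq_getElem hlsi
  exact pmatch_var_det hvp (hm1 i p ls[i] hpi hli) (hm2 i p ls[i] hpi hli)

end Glue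

/-- Determinism of `merge`. -/
theorem merge_det {h : Heap Con} (hms : MaxShared h) {c : Con} {ls : List Loc}
    {h1 h2 : Heap Con} {l1 l2 : Loc} (m1 : Merge h c ls h1 l1)
    (m2 : Merge h c ls h2 l2) : h1 = h2 ∧ l1 = l2 := by
  cases m1 with
  | reuse e1 =>
      cases m2 with
      | reuse e2 => exact ⟨rfl, hms _ _ _ _ e1 e2⟩
      | fresh hne _ _ => exact absurd e1 (hne _)
  | fresh hne1 hnone1 hmin1 =>
      cases m2 with
      | reuse e2 => exact absurd e2 (hne1 _)
      | fresh hne2 hnone2 hmin2 =>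
          have : l1 = l2 := by
            rcases lt_trichotomy l1 l2 with h' | h' | h'
            · exact absurd hnone1 (hmin2 _ h')
            · exact h'
            · exact absurd hnone2 (hmin1 _ h')
          subst this
          exact ⟨rfl, rfl⟩

/-! #### Inversion lemmas for the four step relations -/

theorem applyStep_inv {P : Prog Op Con V} {cfg c' : Config Op Con}
    (hs : ApplyStep P cfg c') :
    ∃ (C : HCache Op) (h : Heap Con) (E : Ctx Op Con) (f : Op) (ls : List Loc)
      (r : Rule Op Con V) (σ : V → Loc),
      cfg = (C, h, E.plug (.op f (ls.map Expr.loc))) ∧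
      c' = (C, h, E.plug (.marked f ls (instE σ r.rhs))) ∧
      r ∈ P.rules ∧ r.lhsOp = f ∧ r.lhsArgs.length = ls.length ∧
      (∀ (i : ℕ) p l, r.lhsArgs[i]? = some p → ls[i]? = some l → PMatch h σ p l) := by
  cases hs with
  | mk h1 h2 h3 h4 h5 => exact ⟨_, _, _, _, _, _, _, rfl, rfl, h2, h3, h4, h5⟩

theorem readStep_inv {cfg c' : Config Op Con} (hs : ReadStep cfg c') :
    ∃ (C : HCache Op) (h : Heap Con) (E : Ctx Op Con) (f : Op) (ls : List Loc) (l : Loc),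
      cfg = (C, h, E.plug (.op f (ls.map Expr.loc))) ∧
      c' = (C, h, E.plug (.loc l)) ∧ (f, ls, l) ∈ C := by
  cases hs with
  | mk h1 => exact ⟨_, _, _, _, _, _, rfl, rfl, h1⟩

theorem storeStep_inv {cfg c' : Config Op Con} (hs : StoreStep cfg c') :
    ∃ (C : HCache Op) (h : Heap Con) (E : Ctx Op Con) (f : Op) (ls : List Loc) (l : Loc),
      cfg = (C, h, E.plug (.marked f ls (.loc l))) ∧
      c' = (insert (f, ls, l) C, h, E.plug (.loc l)) := by
  cases hs with
  | mk => exact ⟨_, _, _, _, _, _, rfl, rfl⟩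

theorem mergeStep_inv {cfg c' : Config Op Con} (hs : MergeStep cfg c') :
    ∃ (C : HCache Op) (h h' : Heap Con) (E : Ctx Op Con) (c : Con) (ls : List Loc)
      (l : Loc),
      cfg = (C, h, E.plug (.con c (ls.map Expr.loc))) ∧
      c' = (C, h', E.plug (.loc l)) ∧ Merge h c ls h' l := by
  cases hs with
  | mk h1 => exact ⟨_, _, _, _, _, _, _, rfl, rfl, h1⟩

end Aux

/-- Lemma 11.(1).  Each of the four relations `⇀` (apply), `→read`,
`→store` and `→merge` is deterministic on well-formed configurations. -/
theorem statement9 {Op Con V : Type} [DecidableEq V] (P : Prog Op Con V)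
    (hP : Orthogonal P) (c c1 c2 : Config Op Con) (hwf : WF c) :
    (ApplyStep P c c1 → ApplyStep P c c2 → c1 = c2) ∧
    (ReadStep c c1 → ReadStep c c2 → c1 = c2) ∧
    (StoreStep c c1 → StoreStep c c2 → c1 = c2) ∧
    (MergeStep c c1 → MergeStep c c2 → c1 = c2) := by
  refine ⟨?_, ?_, ?_, ?_⟩
  · -- (apply)
    intro s1 s2
    obtain ⟨C1, h1, E1, f1, ls1, r1, σ1, e1, e1', hr1, ho1, hl1, hm1⟩ := applyStep_inv s1
    obtain ⟨C2, h2, E2, f2, ls2, r2, σ2, e2, e2', hr2, ho2, hl2, hm2⟩ := applyStep_inv s2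
    subst e1
    obtain ⟨hC, hh, he⟩ : C1 = C2 ∧ h1 = h2 ∧
        E1.plug (.op f1 (ls1.map Expr.loc)) = E2.plug (.op f2 (ls2.map Expr.loc)) := by
      simpa [Prod.mk.injEq] using e2
    subst hC; subst hh
    obtain ⟨hE, hred⟩ := plug_uniq (safeR_op f1 ls1) (safeR_op f2 ls2) E1 E2 he
    injection hred with hf hargs
    have hls : ls1 = ls2 := loc_map_inj hargs
    subst hf; subst hls; subst hE
    obtain ⟨hr12, hinst⟩ := apply_det hP hr1 ho1 hl1 hm1 hr2 ho2 hl2 hm2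
    rw [e1', e2', hinst]
  · -- (read)
    intro s1 s2
    obtain ⟨C1, h1, E1, f1, ls1, l1, e1, e1', hc1⟩ := readStep_inv s1
    obtain ⟨C2, h2, E2, f2, ls2, l2, e2, e2', hc2⟩ := readStep_inv s2
    subst e1
    obtain ⟨hC, hh, he⟩ : C1 = C2 ∧ h1 = h2 ∧
        E1.plug (.op f1 (ls1.map Expr.loc)) = E2.plug (.op f2 (ls2.map Expr.loc)) := by
      simpa [Prod.mk.injEq] using e2
    subst hC; subst hh
    obtain ⟨hE, hred⟩ := plug_uniq (safeR_op f1 ls1) (safeR_op f2 ls2) E1 E2 he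
    injection hred with hf hargs
    have hls : ls1 = ls2 := loc_map_inj hargs
    subst hf; subst hls; subst hE
    have hl12 : l1 = l2 := hwf.2.2.1 f1 ls1 l1 l2 hc1 hc2
    rw [e1', e2', hl12]
  · -- (store)
    intro s1 s2
    obtain ⟨C1, h1, E1, f1, ls1, l1, e1, e1'⟩ := storeStep_inv s1
    obtain ⟨C2, h2, E2, f2, ls2, l2, e2, e2'⟩ := storeStep_inv s2
    subst e1
    obtain ⟨hC, hh, he⟩ : C1 = C2 ∧ h1 = h2 ∧
        E1.plug (.marked f1 ls1 (.loc l1)) = E2.plug (.marked f2 ls2 (.loc l2)) := by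
      simpa [Prod.mk.injEq] using e2
    subst hC; subst hh
    obtain ⟨hE, hred⟩ := plug_uniq (safeR_marked f1 ls1 l1) (safeR_marked f2 ls2 l2)
      E1 E2 he
    injection hred with hf hls hb
    injection hb with hl12
    subst hf; subst hls; subst hl12; subst hE
    rw [e1', e2']
  · -- (merge)
    intro s1 s2
    obtain ⟨C1, h1, h1', E1, cc1, ls1, l1, e1, e1', hmg1⟩ := mergeStep_inv s1
    obtain ⟨C2, h2, h2', E2, cc2, ls2, l2, e2, e2', hmg2⟩ := mergeStep_inv s2
    subst e1
    obtain ⟨hC, hh, he⟩ : C1 = C2 ∧ h1 = h2 ∧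
        E1.plug (.con cc1 (ls1.map Expr.loc)) = E2.plug (.con cc2 (ls2.map Expr.loc)) := by
      simpa [Prod.mk.injEq] using e2
    subst hC; subst hh
    obtain ⟨hE, hred⟩ := plug_uniq (safeR_con cc1 ls1) (safeR_con cc2 ls2) E1 E2 he
    injection hred with hc hargs
    have hls : ls1 = ls2 := loc_map_inj hargs
    subst hc; subst hls; subst hE
    obtain ⟨hh', hl'⟩ := merge_det hwf.1 hmg1 hmg2
    rw [e1', e2', hh', hl']

end Memo
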